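/- The polynomial EC_3(z_1, z_2, z_3; q, t, r) is symmetric in z_1, z_2, z_3: for every permutation π of {1,2,3}, EC_3(z_{π(1)}, z_{π(2)}, z_{π(3)}; q, t, r) = EC_3(z_1, z_2, z_3; q, t, r). -/
import Mathlib


/-- `EC₃(z₁, z₂, z₃; q, t, r)` as the sum over the five set partitions of `{1,2,3}`. -/
def EC3 {K : Type*} [Field K] (q t r z₁ z₂ z₃ : K) : K :=
  6 * 1 * (-q + t * z₁) * (-q + t * z₂ - r * (z₁ - z₂))
      * (-q + t * z₃ - r * (z₁ - z₃ + (z₂ - z₃)))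
  + 6 * ((r * (z₁ - z₂) - 1) / 2) * (-(2 : K) * q + t * (z₁ + z₂))
      * (-q + t * z₃ - r * (z₁ + z₂ - 2 * z₃))
  + 6 * ((r * (z₁ - z₃) - 1) / 2) * (-(2 : K) * q + t * (z₁ + z₃))
      * (-q + t * z₂ - r * (z₁ + z₃ - 2 * z₂))
  + 6 * ((r * (z₂ - z₃) - 1) / 2) * (-q + t * z₁)
      * (-(2 : K) * q + t * (z₂ + z₃) - r * (2 * z₁ - z₂ - z₃))
  + 6 * ((1 : K) / 6 * ((r * (z₁ - z₂) - 1) * (r * (z₁ + z₂ - 2 * z₃) - 2)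
          + (r * (z₁ - z₃) - 1) * (r * (z₁ + z₃ - 2 * z₂) - 2)))
      * (-(3 : K) * q + t * (z₁ + z₂ + z₃))

set_option maxHeartbeats 2000000 in
private lemma EC3_swap12 {K : Type*} [Field K] [CharZero K] (q t r a b c : K) :
    EC3 q t r b a c = EC3 q t r a b c := by
  unfold EC3; field_simp; ring

set_option maxHeartbeats 2000000 in
private lemma EC3_swap23 {K : Type*} [Field K] [CharZero K] (q t r a b c : K) :
    EC3 q t r a c b = EC3 q t r a b c := by
  unfold EC3; field_simp; ring

private lemma perm_fin3_cases (π : Equiv.Perm (Fin 3)) :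
    (π 0, π 1, π 2) = (0, 1, 2) ∨ (π 0, π 1, π 2) = (0, 2, 1) ∨
    (π 0, π 1, π 2) = (1, 0, 2) ∨ (π 0, π 1, π 2) = (1, 2, 0) ∨
    (π 0, π 1, π 2) = (2, 0, 1) ∨ (π 0, π 1, π 2) = (2, 1, 0) := by
  revert π; decide

/-- `EC₃` is symmetric in `z₁, z₂, z₃`: it is invariant under every permutation. -/
theorem EC_three_symmetric (K : Type*) [Field K] [CharZero K] (q t r : K)
    (z : Fin 3 → K) (π : Equiv.Perm (Fin 3)) :
    EC3 q t r (z (π 0)) (z (π 1)) (z (π 2)) = EC3 q t r (z 0) (z 1) (z 2) := by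
  rcases perm_fin3_cases π with h | h | h | h | h | h <;>
    rw [Prod.mk.injEq, Prod.mk.injEq] at h <;>
    obtain ⟨h0, h1, h2⟩ := h <;> rw [h0, h1, h2]
  · exact EC3_swap23 ..
  · exact EC3_swap12 ..
  · rw [EC3_swap23, EC3_swap12]
  · rw [EC3_swap12, EC3_swap23]
  · rw [EC3_swap12, EC3_swap23, EC3_swap12]
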